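/- Let M be a Hilbert C*-module over A and {w_t}_{t=1}^∞ a sequence in M. Define inductively, for ε = 0: q̂_t = w_t − Σ_{s<t} q_s⟨q_s, w_t⟩, and q_t = q̂_t·b̂_t (a normalization of q̂_t) if q̂_t ≠ 0, q_t = 0 otherwise. Then {q_t}_{t=1}^∞ (after discarding zero vectors) is an orthonormal system in M, and the closed A-linear span of {q_t} contains every w_t. In particular, if the A-linear span of {w_t} is dense in M, then {q_t} is an orthonormal basis of M. -/

import Mathlib

open scoped Matrix.Norms.L2Operator ComplexOrder

/-- A Hilbert C*-module over the C*-algebra `ℂ^{m×m}` of `m × m` complex matrices (with the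
operator norm): a right module with a matrix-valued inner product inducing the norm of `M`. -/
structure HilbertModuleMat (m : ℕ) (M : Type*) [NormedAddCommGroup M] where
  smul : M → Matrix (Fin m) (Fin m) ℂ → M
  inner : M → M → Matrix (Fin m) (Fin m) ℂ
  smul_add_vec : ∀ (u v : M) c, smul (u + v) c = smul u c + smul v c
  smul_add_alg : ∀ (u : M) c d, smul u (c + d) = smul u c + smul u d
  smul_mul : ∀ (u : M) c d, smul u (c * d) = smul (smul u c) d
  smul_one : ∀ u : M, smul u 1 = u
  inner_add_right : ∀ u v w : M, inner u (v + w) = inner u v + inner u w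
  inner_smul_right : ∀ (u v : M) c, inner u (smul v c) = inner u v * c
  inner_conj : ∀ u v : M, inner v u = star (inner u v)
  inner_self_posSemidef : ∀ u : M, (inner u u).PosSemidef
  inner_definite : ∀ u : M, inner u u = 0 → u = 0
  norm_eq : ∀ u : M, ‖u‖ = Real.sqrt ‖inner u u‖

/-- A vector `q` is *normalized* if `⟨q,q⟩` is a nonzero idempotent. -/
def HilbertModuleMat.Normalized {m : ℕ} {M : Type*} [NormedAddCommGroup M]
    (h : HilbertModuleMat m M) (q : M) : Prop :=
  h.inner q q ≠ 0 ∧ h.inner q q * h.inner q q = h.inner q q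

/-- The closure of the `ℂ^{m×m}`-submodule spanned by a sequence. -/
def spanClosureSeq {m : ℕ} {M : Type*} [NormedAddCommGroup M] (h : HilbertModuleMat m M)
    (q : ℕ → M) : Set M :=
  closure {v : M | ∃ (s : Finset ℕ) (c : ℕ → Matrix (Fin m) (Fin m) ℂ),
    v = ∑ t ∈ s, h.smul (q t) (c t)}


namespace HilbertModuleMat

variable {m : ℕ} {M : Type*} [NormedAddCommGroup M] (h : HilbertModuleMat m M)

lemma inner_zero_right (u : M) : h.inner u 0 = 0 := by
  have h0 : h.inner u 0 + h.inner u 0 = h.inner u 0 := by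
    rw [← h.inner_add_right, add_zero]
  exact add_eq_left.mp h0

lemma inner_zero_left (u : M) : h.inner 0 u = 0 := by
  rw [h.inner_conj, h.inner_zero_right, star_zero]

lemma smul_zero_alg (u : M) : h.smul u 0 = 0 := by
  have h0 : h.smul u 0 + h.smul u 0 = h.smul u 0 := by
    rw [← h.smul_add_alg, add_zero]
  exact add_eq_left.mp h0

lemma zero_smul_vec (c : Matrix (Fin m) (Fin m) ℂ) : h.smul 0 c = 0 := by
  have h0 : h.smul 0 c + h.smul 0 c = h.smul 0 c := by
    rw [← h.smul_add_vec, add_zero]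
  exact add_eq_left.mp h0

lemma inner_sub_right (u v x : M) : h.inner u (v - x) = h.inner u v - h.inner u x := by
  have h0 := h.inner_add_right u (v - x) x
  rw [sub_add_cancel] at h0
  exact eq_sub_of_add_eq h0.symm

lemma inner_sum_right (u : M) (s : Finset ℕ) (f : ℕ → M) :
    h.inner u (∑ t ∈ s, f t) = ∑ t ∈ s, h.inner u (f t) := by
  induction s using Finset.cons_induction with
  | empty => simp [h.inner_zero_right]
  | cons a s ha ih => rw [Finset.sum_cons, Finset.sum_cons, h.inner_add_right, ih]

lemma sum_smul_vec (s : Finset ℕ) (f : ℕ → M) (c : Matrix (Fin m) (Fin m) ℂ) :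
    h.smul (∑ t ∈ s, f t) c = ∑ t ∈ s, h.smul (f t) c := by
  induction s using Finset.cons_induction with
  | empty => simp [h.zero_smul_vec]
  | cons a s ha ih => rw [Finset.sum_cons, Finset.sum_cons, h.smul_add_vec, ih]

lemma inner_smul_left (u v : M) (c : Matrix (Fin m) (Fin m) ℂ) :
    h.inner (h.smul u c) v = star c * h.inner u v := by
  rw [h.inner_conj v (h.smul u c)]
  rw [h.inner_smul_right, star_mul, ← h.inner_conj]

lemma star_inner_self (u : M) : star (h.inner u u) = h.inner u u := by
  rw [Matrix.star_eq_conjTranspose]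
  exact (h.inner_self_posSemidef u).1

lemma smul_inner_self (q : M) (hq : h.Normalized q) : h.smul q (h.inner q q) = q := by
  set p := h.inner q q with hp
  have e1 : h.inner q (h.smul q p - q) = 0 := by
    rw [h.inner_sub_right, h.inner_smul_right, ← hp, hq.2, sub_self]
  have e2 : h.inner (h.smul q p - q) q = 0 := by
    rw [h.inner_conj q (h.smul q p - q), e1, star_zero]
  have key : h.inner (h.smul q p - q) (h.smul q p - q) = 0 := by
    rw [h.inner_sub_right, h.inner_smul_right, e2, zero_mul, zero_sub, neg_zero]
  exact sub_eq_zero.mp (h.inner_definite _ key)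

lemma inner_self_mul (q : M) (hq : h.Normalized q) (x : M) :
    h.inner q q * h.inner q x = h.inner q x := by
  conv_lhs => rw [← h.star_inner_self q, ← h.inner_smul_left, h.smul_inner_self q hq]

end HilbertModuleMat

/-- Gram–Schmidt orthonormalization with `ε = 0`: with `q̂_t = w_t − Σ_{s<t} q_s⟨q_s,w_t⟩`
and `q_t` a normalization of `q̂_t` (exactly reconstructible: `q_t·b = q̂_t`) when `q̂_t ≠ 0`,
`q_t = 0` otherwise, the sequence `{q_t}` is an orthonormal system (after discarding zeros),
its closed span contains every `w_t`, and if the span of `{w_t}` is dense then the span of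
`{q_t}` is dense (orthonormal basis). -/
theorem gram_schmidt_orthonormal
    {m : ℕ} {M : Type*} [NormedAddCommGroup M] [CompleteSpace M]
    (h : HilbertModuleMat m M) (w q qhat : ℕ → M)
    (hqhat : ∀ t, qhat t = w t - ∑ s ∈ Finset.range t, h.smul (q s) (h.inner (q s) (w t)))
    (hnz : ∀ t, qhat t ≠ 0 →
      ∃ bhat b : Matrix (Fin m) (Fin m) ℂ,
        q t = h.smul (qhat t) bhat ∧ h.Normalized (q t) ∧ h.smul (q t) b = qhat t)
    (hz : ∀ t, qhat t = 0 → q t = 0) :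
    (∀ s t, s ≠ t → h.inner (q s) (q t) = 0) ∧
    (∀ t, q t ≠ 0 → h.Normalized (q t)) ∧
    (∀ t, w t ∈ spanClosureSeq h q) ∧
    (Dense {v : M | ∃ (s : Finset ℕ) (c : ℕ → Matrix (Fin m) (Fin m) ℂ),
        v = ∑ t ∈ s, h.smul (w t) (c t)} →
      Dense {v : M | ∃ (s : Finset ℕ) (c : ℕ → Matrix (Fin m) (Fin m) ℂ),
        v = ∑ t ∈ s, h.smul (q t) (c t)}) := by
  classical
  -- reconstruction coefficient in all cases
  have hb : ∀ t, ∃ b, h.smul (q t) b = qhat t := by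
    intro t
    by_cases h0 : qhat t = 0
    · exact ⟨0, by rw [hz t h0, h0, h.zero_smul_vec]⟩
    · obtain ⟨_, b, _, _, hb⟩ := hnz t h0
      exact ⟨b, hb⟩
  -- key orthogonality by strong induction
  have key : ∀ t, ∀ s < t, h.inner (q s) (q t) = 0 := by
    intro t
    induction t using Nat.strong_induction_on with
    | _ t ih =>
      intro s hst
      by_cases hqs : q s = 0
      · rw [hqs, h.inner_zero_left]
      · have hqhs : qhat s ≠ 0 := fun h0 => hqs (hz s h0)
        obtain ⟨bhat, b, hqdef, hnorm, hrec⟩ := hnz s hqhs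
        have hinq : h.inner (q s) (qhat t) = 0 := by
          rw [hqhat t, h.inner_sub_right, h.inner_sum_right]
          have hsum : ∑ s' ∈ Finset.range t,
              h.inner (q s) (h.smul (q s') (h.inner (q s') (w t)))
              = h.inner (q s) (w t) := by
            rw [Finset.sum_eq_single s]
            · rw [h.inner_smul_right, h.inner_self_mul (q s) hnorm]
            · intro s' hs' hne
              rw [h.inner_smul_right]
              have hzero : h.inner (q s) (q s') = 0 := by
                rcases lt_or_gt_of_ne hne with hlt | hgt
                · rw [h.inner_conj (q s') (q s), ih s hst s' hlt, star_zero]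
                · exact ih s' (Finset.mem_range.mp hs') s hgt
              rw [hzero, zero_mul]
            · intro habs
              exact absurd (Finset.mem_range.mpr hst) habs
          rw [hsum, sub_self]
        by_cases hqt : qhat t = 0
        · rw [hz t hqt, h.inner_zero_right]
        · obtain ⟨bhat', b', hq', _, _⟩ := hnz t hqt
          rw [hq', h.inner_smul_right, hinq, zero_mul]
  -- each w t lies in the algebraic span of q
  have hwS : ∀ t, ∃ (s : Finset ℕ) (c : ℕ → Matrix (Fin m) (Fin m) ℂ),
      w t = ∑ t' ∈ s, h.smul (q t') (c t') := by
    intro t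
    obtain ⟨b, hb'⟩ := hb t
    refine ⟨Finset.range (t + 1),
      fun s' => if s' = t then b else h.inner (q s') (w t), ?_⟩
    rw [Finset.sum_range_succ]
    beta_reduce
    rw [if_pos rfl, hb',
      Finset.sum_congr rfl (fun s' hs' => by
        rw [if_neg (Nat.ne_of_lt (Finset.mem_range.mp hs'))]),
      hqhat t]
    abel
  -- span of q is closed under the module operations
  set S : Set M := {v : M | ∃ (s : Finset ℕ) (c : ℕ → Matrix (Fin m) (Fin m) ℂ),
      v = ∑ t ∈ s, h.smul (q t) (c t)} with hS
  have S_zero : (0 : M) ∈ S := ⟨∅, fun _ => 0, by simp⟩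
  have S_add : ∀ x y, x ∈ S → y ∈ S → x + y ∈ S := by
    rintro _ _ ⟨s1, c1, rfl⟩ ⟨s2, c2, rfl⟩
    refine ⟨s1 ∪ s2, fun t => (if t ∈ s1 then c1 t else 0) + (if t ∈ s2 then c2 t else 0), ?_⟩
    have expand : ∀ (s' : Finset ℕ) (c : ℕ → Matrix (Fin m) (Fin m) ℂ),
        s' ⊆ s1 ∪ s2 →
        ∑ t ∈ s1 ∪ s2, h.smul (q t) (if t ∈ s' then c t else 0)
          = ∑ t ∈ s', h.smul (q t) (c t) := by
      intro s' c hsub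
      rw [Finset.sum_congr rfl (fun t _ => by
        rw [apply_ite (h.smul (q t)), h.smul_zero_alg]),
        Finset.sum_ite_mem, Finset.inter_eq_right.mpr hsub]
    calc ∑ t ∈ s1, h.smul (q t) (c1 t) + ∑ t ∈ s2, h.smul (q t) (c2 t)
        = ∑ t ∈ s1 ∪ s2, h.smul (q t) (if t ∈ s1 then c1 t else 0)
          + ∑ t ∈ s1 ∪ s2, h.smul (q t) (if t ∈ s2 then c2 t else 0) := by
          rw [expand s1 c1 Finset.subset_union_left, expand s2 c2 Finset.subset_union_right]
      _ = ∑ t ∈ s1 ∪ s2, h.smul (q t)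
            ((if t ∈ s1 then c1 t else 0) + (if t ∈ s2 then c2 t else 0)) := by
          rw [← Finset.sum_add_distrib]
          exact Finset.sum_congr rfl (fun t _ => (h.smul_add_alg _ _ _).symm)
  have S_smul : ∀ x c, x ∈ S → h.smul x c ∈ S := by
    rintro _ c ⟨s1, c1, rfl⟩
    refine ⟨s1, fun t => c1 t * c, ?_⟩
    rw [h.sum_smul_vec]
    exact Finset.sum_congr rfl (fun t _ => (h.smul_mul _ _ _).symm)
  have hWcomb : ∀ (s : Finset ℕ) (c : ℕ → Matrix (Fin m) (Fin m) ℂ),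
      (∑ t ∈ s, h.smul (w t) (c t)) ∈ S := by
    intro s c
    induction s using Finset.cons_induction with
    | empty => simpa using S_zero
    | cons a s ha ih =>
      rw [Finset.sum_cons]
      exact S_add _ _ (S_smul _ _ (hwS a)) ih
  refine ⟨?_, ?_, ?_, ?_⟩
  · intro s t hst
    rcases lt_or_gt_of_ne hst with hlt | hgt
    · exact key t s hlt
    · rw [h.inner_conj (q t) (q s), key s t hgt, star_zero]
  · intro t hqt
    have hqh : qhat t ≠ 0 := fun h0 => hqt (hz t h0)
    obtain ⟨_, _, _, hnorm, _⟩ := hnz t hqh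
    exact hnorm
  · intro t
    exact subset_closure (hwS t)
  · intro hd
    refine hd.mono ?_
    rintro v ⟨s, c, rfl⟩
    exact hWcomb s c
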